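/- Let X be a nonempty set and let 𝒟 be an algebra of bounded real-valued functions on X that is stable under normal contractions and C¹_c(ℝ²)-stable. Let (ℰ,𝒟) be a nonnegative definite symmetric bilinear form that is sup-norm-closable and on which normal contractions operate. Then for every f ∈ 𝒟 the linear functional L_f is bounded with ‖L_f‖_{𝒟'} ≤ 2ℰ(f): for all f, h ∈ 𝒟 one has |2ℰ(f·h, f) − ℰ(f², h)| ≤ 2·‖h‖_sup·ℰ(f,f). -/

import Mathlib

open Filter Topology

/-- The supremum norm of a (bounded) real-valued function. -/
noncomputable def supNorm {X : Type*} (f : X → ℝ) : ℝ := ⨆ x, |f x|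

/-- A normal contraction: `F 0 = 0` and `F` is 1-Lipschitz. -/
def NormalContraction (F : ℝ → ℝ) : Prop :=
  F 0 = 0 ∧ ∀ x y : ℝ, |F x - F y| ≤ |x - y|

/-- Sup-norm-closability of a bilinear form `(ℰ, 𝒟)`: every `ℰ`-Cauchy sequence in `𝒟`
that tends to zero uniformly has energies tending to zero. -/
def SupNormClosable {X : Type*} (𝒟 : Set (X → ℝ)) (ℰ : (X → ℝ) → (X → ℝ) → ℝ) : Prop :=
  ∀ f : ℕ → X → ℝ, (∀ n, f n ∈ 𝒟) →
    (∀ ε : ℝ, 0 < ε → ∃ N, ∀ n ≥ N, ∀ m ≥ N, ℰ (f n - f m) (f n - f m) < ε) →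
    Tendsto (fun n => supNorm (f n)) atTop (𝓝 0) →
    Tendsto (fun n => ℰ (f n) (f n)) atTop (𝓝 0)

lemma abs_min_sub_min_le_abs' (a b c : ℝ) : |min a c - min b c| ≤ |a - b| := by
  have := abs_min_sub_min_le_max a c b c
  simpa [abs_nonneg] using this

/-- Bundle of the algebraic hypotheses used in the proof. -/
structure EnergySetup (X : Type*) where
  𝒟 : Set (X → ℝ)
  ℰ : (X → ℝ) → (X → ℝ) → ℝ
  hadd : ∀ f ∈ 𝒟, ∀ g ∈ 𝒟, f + g ∈ 𝒟
  hsmul : ∀ c : ℝ, ∀ f ∈ 𝒟, c • f ∈ 𝒟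
  hmul : ∀ f ∈ 𝒟, ∀ g ∈ 𝒟, f * g ∈ 𝒟
  hnc : ∀ F : ℝ → ℝ, NormalContraction F → ∀ f ∈ 𝒟, F ∘ f ∈ 𝒟
  hsym : ∀ f ∈ 𝒟, ∀ g ∈ 𝒟, ℰ f g = ℰ g f
  hlin_add : ∀ f ∈ 𝒟, ∀ g ∈ 𝒟, ∀ h ∈ 𝒟, ℰ (f + g) h = ℰ f h + ℰ g h
  hlin_smul : ∀ c : ℝ, ∀ f ∈ 𝒟, ∀ g ∈ 𝒟, ℰ (c • f) g = c * ℰ f g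
  hnonneg : ∀ f ∈ 𝒟, 0 ≤ ℰ f f
  hop : ∀ F : ℝ → ℝ, NormalContraction F → ∀ f ∈ 𝒟, ℰ (F ∘ f) (F ∘ f) ≤ ℰ f f

namespace EnergySetup

variable {X : Type*} (S : EnergySetup X)

lemma E_add_right {u v w : X → ℝ} (hu : u ∈ S.𝒟) (hv : v ∈ S.𝒟) (hw : w ∈ S.𝒟) :
    S.ℰ u (v + w) = S.ℰ u v + S.ℰ u w := by
  rw [S.hsym u hu (v + w) (S.hadd v hv w hw), S.hlin_add v hv w hw u hu,
    S.hsym v hv u hu, S.hsym w hw u hu]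

lemma E_smul_right {u v : X → ℝ} (c : ℝ) (hu : u ∈ S.𝒟) (hv : v ∈ S.𝒟) :
    S.ℰ u (c • v) = c * S.ℰ u v := by
  rw [S.hsym u hu (c • v) (S.hsmul c v hv), S.hlin_smul c v hv u hu, S.hsym v hv u hu]

/-- Full expansion of the quadratic form on a linear combination. -/
lemma E_expand {u v : X → ℝ} (a b : ℝ) (hu : u ∈ S.𝒟) (hv : v ∈ S.𝒟) :
    S.ℰ (a • u + b • v) (a • u + b • v)
      = a^2 * S.ℰ u u + 2*a*b * S.ℰ u v + b^2 * S.ℰ v v := by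
  have hau : a • u ∈ S.𝒟 := S.hsmul a u hu
  have hbv : b • v ∈ S.𝒟 := S.hsmul b v hv
  rw [S.hlin_add _ hau _ hbv _ (S.hadd _ hau _ hbv)]
  rw [S.E_add_right hau hau hbv, S.E_add_right hbv hau hbv]
  rw [S.hlin_smul a u hu _ hau, S.hlin_smul a u hu _ hbv,
      S.hlin_smul b v hv _ hau, S.hlin_smul b v hv _ hbv]
  rw [S.E_smul_right a hu hu, S.E_smul_right b hu hv,
      S.E_smul_right a hv hu, S.E_smul_right b hv hv]
  rw [S.hsym v hv u hu]
  ring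

/-- simple expansion of ℰ(u+v,u+v). -/
lemma E_expand' {u v : X → ℝ} (hu : u ∈ S.𝒟) (hv : v ∈ S.𝒟) :
    S.ℰ (u + v) (u + v) = S.ℰ u u + 2 * S.ℰ u v + S.ℰ v v := by
  have := S.E_expand (u := u) (v := v) 1 1 hu hv
  simpa using this

/-- AM-GM form of Cauchy–Schwarz : `2 ℰ(u,v) ≤ ρ⁻¹ ℰ(u,u) + ρ ℰ(v,v)`. -/
lemma E_cs {u v : X → ℝ} (hu : u ∈ S.𝒟) (hv : v ∈ S.𝒟) {ρ : ℝ} (hρ : 0 < ρ) :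
    2 * S.ℰ u v ≤ ρ⁻¹ * S.ℰ u u + ρ * S.ℰ v v := by
  have h0 : 0 ≤ S.ℰ ((1:ℝ) • u + (-ρ) • v) ((1:ℝ) • u + (-ρ) • v) :=
    S.hnonneg _ (S.hadd _ (S.hsmul 1 u hu) _ (S.hsmul (-ρ) v hv))
  rw [S.E_expand 1 (-ρ) hu hv] at h0
  have h2 : 2 * S.ℰ u v ≤ (S.ℰ u u + ρ^2 * S.ℰ v v) / ρ := by
    rw [le_div_iff₀ hρ]; nlinarith
  calc 2 * S.ℰ u v ≤ (S.ℰ u u + ρ^2 * S.ℰ v v) / ρ := h2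
    _ = ρ⁻¹ * S.ℰ u u + ρ * S.ℰ v v := by field_simp

lemma E_neg_left {u v : X → ℝ} (hu : u ∈ S.𝒟) (hv : v ∈ S.𝒟) :
    S.ℰ ((-1 : ℝ) • u) v = - S.ℰ u v := by
  rw [S.hlin_smul (-1) u hu v hv]; ring

/-- two-sided AM-GM Cauchy-Schwarz -/
lemma E_cs_abs {u v : X → ℝ} (hu : u ∈ S.𝒟) (hv : v ∈ S.𝒟) {ρ : ℝ} (hρ : 0 < ρ) :
    2 * |S.ℰ u v| ≤ ρ⁻¹ * S.ℰ u u + ρ * S.ℰ v v := by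
  rcases abs_cases (S.ℰ u v) with ⟨h, _⟩ | ⟨h, _⟩
  · rw [h]; exact S.E_cs hu hv hρ
  · rw [h]
    have h1 := S.E_cs (S.hsmul (-1) u hu) hv hρ
    rw [S.E_neg_left hu hv] at h1
    have huu : S.ℰ ((-1 : ℝ) • u) ((-1 : ℝ) • u) = S.ℰ u u := by
      rw [S.E_neg_left hu (S.hsmul (-1) u hu), S.E_smul_right (-1) hu hu]; ring
    rw [huu] at h1
    linarith

end EnergySetup

namespace EnergySetup

variable {X : Type*} (S : EnergySetup X)

/-- Core of the maximum principle: if adding `t • p` never decreases the energy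
of `v`, then `ℰ(p, v) ≥ 0`. -/
lemma M_core {v p : X → ℝ} (hv : v ∈ S.𝒟) (hp : p ∈ S.𝒟)
    (H : ∀ t : ℝ, 0 < t → S.ℰ v v ≤ S.ℰ (v + t • p) (v + t • p)) :
    0 ≤ S.ℰ p v := by
  have key : ∀ t : ℝ, 0 < t → 0 ≤ 2 * S.ℰ v p + t * S.ℰ p p := by
    intro t ht
    have h0 := H t ht
    have hexp : S.ℰ (v + t • p) (v + t • p)
        = S.ℰ v v + 2*t * S.ℰ v p + t^2 * S.ℰ p p := by
      have := S.E_expand (u := v) (v := p) 1 t hv hp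
      simpa using this
    rw [hexp] at h0
    nlinarith
  have hvp : S.ℰ v p = S.ℰ p v := S.hsym v hv p hp
  by_contra hneg
  push_neg at hneg
  have hpp : 0 ≤ S.ℰ p p := S.hnonneg p hp
  set ε : ℝ := - S.ℰ p v with hε
  have hεpos : 0 < ε := by simp [hε]; linarith
  have ht : 0 < ε / (S.ℰ p p + 1) := by positivity
  have := key (ε / (S.ℰ p p + 1)) ht
  rw [hvp] at this
  have hlt : ε / (S.ℰ p p + 1) * S.ℰ p p < 2 * ε := by
    rw [div_mul_eq_mul_div, div_lt_iff₀ (by linarith)]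
    nlinarith
  nlinarith

/-- Maximum principle: if `p ≥ 0` is supported where `v` attains its max `T ≥ 0`,
then `ℰ(p, v) ≥ 0`. -/
lemma M_max {v p : X → ℝ} (hv : v ∈ S.𝒟) (hp : p ∈ S.𝒟)
    {T : ℝ} (hT : 0 ≤ T) (hvT : ∀ x, v x ≤ T) (hp0 : ∀ x, 0 ≤ p x)
    (hsupp : ∀ x, 0 < p x → v x = T) :
    0 ≤ S.ℰ p v := by
  refine S.M_core hv hp (fun t ht => ?_)
  set ψ : ℝ → ℝ := fun s => min s T with hψ
  have hNC : NormalContraction ψ := by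
    constructor
    · simp [hψ, min_eq_left hT]
    · intro x y; exact abs_min_sub_min_le_abs' x y T
  have hid : ψ ∘ (v + t • p) = v := by
    funext x
    simp only [hψ, Function.comp_apply, Pi.add_apply, Pi.smul_apply, smul_eq_mul]
    rcases lt_or_eq_of_le (hp0 x) with hx | hx
    · have hvx := hsupp x hx
      have : T ≤ v x + t * p x := by rw [hvx]; nlinarith
      rw [min_eq_right this, hvx]
    · rw [← hx]; simpa using min_eq_left (hvT x)
  have := S.hop ψ hNC (v + t • p) (S.hadd v hv _ (S.hsmul t p hp))
  rw [hid] at this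
  exact this

/-- Plateau maximum principle: if `R ≤ γ` (with `γ ≥ 0`) and `v ≥ 0` vanishes
wherever `R < γ`, then `ℰ(R, v) ≥ 0`. -/
lemma M_plateau {v R : X → ℝ} (hv : v ∈ S.𝒟) (hR : R ∈ S.𝒟)
    {γ : ℝ} (hγ : 0 ≤ γ) (hv0 : ∀ x, 0 ≤ v x) (hRγ : ∀ x, R x ≤ γ)
    (hsupp : ∀ x, R x < γ → v x = 0) :
    0 ≤ S.ℰ R v := by
  refine S.M_core hv hR (fun t ht => ?_)
  set ψ : ℝ → ℝ := fun s => max (s - t*γ) 0 with hψ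
  have hNC : NormalContraction ψ := by
    constructor
    · have : -(t*γ) ≤ 0 := by nlinarith
      simp [hψ, max_eq_right this]
    · intro x y
      have h1 : |max (x - t*γ) 0 - max (y - t*γ) 0| ≤ |x - t*γ - (y - t*γ)| :=
        abs_max_sub_max_le_abs _ _ _
      simpa using h1
  have hid : ψ ∘ (v + t • R) = v := by
    funext x
    simp only [hψ, Function.comp_apply, Pi.add_apply, Pi.smul_apply, smul_eq_mul]
    rcases lt_or_eq_of_le (hRγ x) with hx | hx
    · rw [hsupp x hx]
      have : t * R x - t * γ ≤ 0 := by nlinarith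
      rw [zero_add, max_eq_right this]
    · rw [hx]
      have : v x + t * γ - t * γ = v x := by ring
      rw [this, max_eq_left (hv0 x)]
  have := S.hop ψ hNC (v + t • R) (S.hadd v hv _ (S.hsmul t R hR))
  rw [hid] at this
  exact this

end EnergySetup

namespace EnergySetup

variable {X : Type*} (S : EnergySetup X)

/-- 1-Lipschitz clamp to `[-K, K]`. -/
lemma clamp_lip (K x y : ℝ) : |min (max x (-K)) K - min (max y (-K)) K| ≤ |x - y| :=
  le_trans (abs_min_sub_min_le_abs' _ _ _) (abs_max_sub_max_le_abs _ _ _)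

/-- Square rule: `ℰ(z², z²) ≤ 4 K² ℰ(z, z)` when `|z| ≤ K`. -/
lemma E_sq {z : X → ℝ} (hz : z ∈ S.𝒟) {K : ℝ} (hK : 0 < K)
    (hzK : ∀ x, |z x| ≤ K) :
    S.ℰ (z * z) (z * z) ≤ 4 * K^2 * S.ℰ z z := by
  set F : ℝ → ℝ := fun s => (min (max s (-K)) K)^2 / (2*K) with hF
  have hNC : NormalContraction F := by
    constructor
    · have h1 : max (0:ℝ) (-K) = 0 := max_eq_left (by linarith)
      have h2 : min (0:ℝ) K = 0 := min_eq_left (by linarith)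
      simp [hF, h1, h2]
    · intro x y
      set cx := min (max x (-K)) K
      set cy := min (max y (-K)) K
      have hcx : |cx| ≤ K := by
        rw [abs_le]
        exact ⟨le_min (le_max_right _ _) (by linarith), min_le_right _ _⟩
      have hcy : |cy| ≤ K := by
        rw [abs_le]
        exact ⟨le_min (le_max_right _ _) (by linarith), min_le_right _ _⟩
      have hdiff : |cx - cy| ≤ |x - y| := clamp_lip K x y
      have : |F x - F y| = |cx^2 - cy^2| / (2*K) := by
        rw [hF]; simp only []
        rw [div_sub_div_same, abs_div, abs_of_pos (by linarith : (0:ℝ) < 2*K)]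
      rw [this]
      rw [div_le_iff₀ (by linarith : (0:ℝ) < 2*K)]
      have hfac : cx^2 - cy^2 = (cx + cy) * (cx - cy) := by ring
      rw [hfac, abs_mul]
      have h1 : |cx + cy| ≤ 2*K := by
        calc |cx + cy| ≤ |cx| + |cy| := abs_add_le _ _
          _ ≤ 2*K := by linarith [hcx, hcy]
      calc |cx + cy| * |cx - cy| ≤ (2*K) * |cx - cy| :=
            mul_le_mul_of_nonneg_right h1 (abs_nonneg _)
        _ ≤ (2*K) * |x - y| := by
            apply mul_le_mul_of_nonneg_left hdiff (by linarith)
        _ = |x - y| * (2*K) := by ring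
  have hmem : F ∘ z ∈ S.𝒟 := S.hnc F hNC z hz
  have hid : z * z = (2*K) • (F ∘ z) := by
    funext x
    have hclamp : min (max (z x) (-K)) K = z x := by
      have h1 := (abs_le.mp (hzK x)).1
      have h2 := (abs_le.mp (hzK x)).2
      rw [max_eq_left h1, min_eq_left h2]
    simp only [Pi.mul_apply, Pi.smul_apply, Function.comp_apply, smul_eq_mul, hF, hclamp]
    field_simp
  have hcontr := S.hop F hNC z hz
  have hsmuls : S.ℰ ((2*K) • (F ∘ z)) ((2*K) • (F ∘ z)) = (2*K)^2 * S.ℰ (F ∘ z) (F ∘ z) := by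
    rw [S.hlin_smul (2*K) _ hmem _ (S.hsmul (2*K) _ hmem), S.E_smul_right (2*K) hmem hmem]
    ring
  rw [hid, hsmuls]
  nlinarith [S.hnonneg (F ∘ z) hmem]

/-- Asymmetric product rule:
`ℰ(w*h) ≤ (aμ+b)² ℰ(w) + (a+b/μ)² ℰ(h)` when `|w| ≤ a`, `|h| ≤ b`. -/
lemma E_prod {w h : X → ℝ} (hw : w ∈ S.𝒟) (hh : h ∈ S.𝒟)
    {a b μ : ℝ} (ha : 0 < a) (hb : 0 ≤ b) (hμ : 0 < μ)
    (hwa : ∀ x, |w x| ≤ a) (hhb : ∀ x, |h x| ≤ b) :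
    S.ℰ (w * h) (w * h) ≤ (a*μ + b)^2 * S.ℰ w w + (a + b/μ)^2 * S.ℰ h h := by
  set P : X → ℝ := w + μ⁻¹ • h with hPdef
  set Q : X → ℝ := w + (-μ⁻¹) • h with hQdef
  have hP : P ∈ S.𝒟 := S.hadd _ hw _ (S.hsmul _ h hh)
  have hQ : Q ∈ S.𝒟 := S.hadd _ hw _ (S.hsmul _ h hh)
  set K : ℝ := a + b/μ with hKdef
  have hK : 0 < K := by positivity
  have hPK : ∀ x, |P x| ≤ K := by
    intro x
    simp only [hPdef, Pi.add_apply, Pi.smul_apply, smul_eq_mul]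
    calc |w x + μ⁻¹ * h x| ≤ |w x| + |μ⁻¹ * h x| := abs_add_le _ _
      _ ≤ a + b/μ := by
          apply add_le_add (hwa x)
          rw [abs_mul, abs_of_pos (by positivity : (0:ℝ) < μ⁻¹)]
          rw [div_eq_inv_mul]
          exact mul_le_mul_of_nonneg_left (hhb x) (by positivity)
  have hQK : ∀ x, |Q x| ≤ K := by
    intro x
    simp only [hQdef, Pi.add_apply, Pi.smul_apply, smul_eq_mul]
    calc |w x + -μ⁻¹ * h x| ≤ |w x| + |(-μ⁻¹) * h x| := abs_add_le _ _
      _ ≤ a + b/μ := by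
          apply add_le_add (hwa x)
          rw [abs_mul, abs_neg, abs_of_pos (by positivity : (0:ℝ) < μ⁻¹)]
          rw [div_eq_inv_mul]
          exact mul_le_mul_of_nonneg_left (hhb x) (by positivity)
  have hPP : P * P ∈ S.𝒟 := S.hmul _ hP _ hP
  have hQQ : Q * Q ∈ S.𝒟 := S.hmul _ hQ _ hQ
  -- polarization identity
  have hid : w * h = (μ/4) • (P * P) + (-(μ/4)) • (Q * Q) := by
    funext x
    simp only [hPdef, hQdef, Pi.mul_apply, Pi.add_apply, Pi.smul_apply, smul_eq_mul]
    have hμ0 : μ ≠ 0 := ne_of_gt hμ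
    field_simp
    ring
  have hsqP := S.E_sq hP hK hPK
  have hsqQ := S.E_sq hQ hK hQK
  -- cross term bound
  have hcross := S.E_cs_abs hPP hQQ (one_pos)
  rw [inv_one, one_mul, one_mul] at hcross
  have hexp : S.ℰ (w*h) (w*h)
      = (μ/4)^2 * S.ℰ (P*P) (P*P) + 2*(μ/4)*(-(μ/4)) * S.ℰ (P*P) (Q*Q)
        + (μ/4)^2 * S.ℰ (Q*Q) (Q*Q) := by
    rw [hid, S.E_expand (μ/4) (-(μ/4)) hPP hQQ]
    ring_nf
  -- parallelogram
  have hpar : S.ℰ P P + S.ℰ Q Q = 2 * S.ℰ w w + 2 * μ⁻¹^2 * S.ℰ h h := by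
    have e1 : S.ℰ P P = S.ℰ w w + 2*μ⁻¹ * S.ℰ w h + μ⁻¹^2 * S.ℰ h h := by
      have := S.E_expand (u := w) (v := h) 1 μ⁻¹ hw hh
      simp only [one_smul, one_pow, one_mul] at this
      rw [hPdef]; rw [this]; ring
    have e2 : S.ℰ Q Q = S.ℰ w w + 2*(-μ⁻¹) * S.ℰ w h + μ⁻¹^2 * S.ℰ h h := by
      have := S.E_expand (u := w) (v := h) 1 (-μ⁻¹) hw hh
      simp only [one_smul, one_pow, one_mul] at this
      rw [hQdef]; rw [this]; ring_nf
    rw [e1, e2]; ring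
  have habs : - S.ℰ (P*P) (Q*Q) ≤ |S.ℰ (P*P) (Q*Q)| := neg_le_abs _
  have hEP : 0 ≤ S.ℰ P P := S.hnonneg P hP
  have hEQ : 0 ≤ S.ℰ Q Q := S.hnonneg Q hQ
  have hstep : S.ℰ (w*h) (w*h) ≤ (μ/4)^2 * 2 * (S.ℰ (P*P) (P*P) + S.ℰ (Q*Q) (Q*Q)) := by
    rw [hexp]
    have h2 : - S.ℰ (P*P) (Q*Q) ≤ |S.ℰ (P*P) (Q*Q)| := neg_le_abs _
    nlinarith [abs_nonneg (S.ℰ (P*P) (Q*Q))]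
  have hstep2 : S.ℰ (w*h) (w*h) ≤ (μ/4)^2 * 2 * (4*K^2*S.ℰ P P + 4*K^2*S.ℰ Q Q) := by
    apply le_trans hstep
    have h4 := add_le_add hsqP hsqQ
    have h5 : (0:ℝ) ≤ (μ/4)^2 * 2 := by positivity
    exact mul_le_mul_of_nonneg_left h4 h5
  have hstep3 : S.ℰ (w*h) (w*h) ≤ (μ/4)^2 * 2 * (4*K^2) * (2 * S.ℰ w w + 2 * μ⁻¹^2 * S.ℰ h h) := by
    apply le_trans hstep2
    have : 4*K^2*S.ℰ P P + 4*K^2*S.ℰ Q Q = 4*K^2 * (S.ℰ P P + S.ℰ Q Q) := by ring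
    rw [this, hpar]
    nlinarith
  apply le_trans hstep3
  have hKμ : (μ/4)^2 * 2 * (4*K^2) * (2 * S.ℰ w w + 2 * μ⁻¹^2 * S.ℰ h h)
      = (μ*K)^2 * S.ℰ w w + (μ*K)^2 * μ⁻¹^2 * S.ℰ h h := by ring
  rw [hKμ]
  have hμK : μ * K = a*μ + b := by
    rw [hKdef]; field_simp
  have hμK2 : (μ*K)^2 * μ⁻¹^2 = K^2 := by
    have hμ0 : μ ≠ 0 := ne_of_gt hμ
    field_simp
  rw [hμK2, hμK, hKdef]

end EnergySetup

namespace EnergySetup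

variable {X : Type*} (S : EnergySetup X)

lemma mem_sub {u v : X → ℝ} (hu : u ∈ S.𝒟) (hv : v ∈ S.𝒟) : u - v ∈ S.𝒟 := by
  have : u - v = u + (-1 : ℝ) • v := by funext x; simp; ring
  rw [this]; exact S.hadd _ hu _ (S.hsmul _ _ hv)

lemma E_sub_left {u v w : X → ℝ} (hu : u ∈ S.𝒟) (hv : v ∈ S.𝒟) (hw : w ∈ S.𝒟) :
    S.ℰ (u - v) w = S.ℰ u w - S.ℰ v w := by
  have h1 : u - v = u + (-1 : ℝ) • v := by funext x; simp; ring
  rw [h1, S.hlin_add _ hu _ (S.hsmul _ _ hv) _ hw, S.hlin_smul _ _ hv _ hw]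
  ring

/-- The quadratic functional `Φ(u) = 2ℰ(c•u − u·h, u) + ℰ(u², h)`;
the main theorem is `Φ(f) ≥ 0`. -/
def Phi (h : X → ℝ) (c : ℝ) (u : X → ℝ) : ℝ :=
  2 * S.ℰ (c • u - u * h) u + S.ℰ (u * u) h

lemma memA {h u : X → ℝ} (hh : h ∈ S.𝒟) (hu : u ∈ S.𝒟) (c : ℝ) :
    c • u - u * h ∈ S.𝒟 :=
  S.mem_sub (S.hsmul c u hu) (S.hmul u hu h hh)

/-- Quadratic expansion of Φ. -/
lemma Phi_add {h u v : X → ℝ} (hh : h ∈ S.𝒟) (hu : u ∈ S.𝒟) (hv : v ∈ S.𝒟) (c : ℝ) :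
    S.Phi h c (u + v) = S.Phi h c u + S.Phi h c v
      + 2 * (S.ℰ (c • u - u * h) v + S.ℰ (c • v - v * h) u + S.ℰ (u * v) h) := by
  have hAu : c • u - u * h ∈ S.𝒟 := S.memA hh hu c
  have hAv : c • v - v * h ∈ S.𝒟 := S.memA hh hv c
  have huv : u * v ∈ S.𝒟 := S.hmul u hu v hv
  have huu : u * u ∈ S.𝒟 := S.hmul u hu u hu
  have hvv : v * v ∈ S.𝒟 := S.hmul v hv v hv
  have hsum : u + v ∈ S.𝒟 := S.hadd u hu v hv
  have e1 : c • (u + v) - (u + v) * h = (c • u - u * h) + (c • v - v * h) := by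
    funext x; simp [mul_add, add_mul]; ring
  have e2 : (u + v) * (u + v) = u * u + ((2:ℝ) • (u * v) + v * v) := by
    funext x; simp; ring
  unfold Phi
  rw [e1, e2]
  rw [S.hlin_add _ hAu _ hAv _ hsum]
  rw [S.E_add_right hAu hu hv, S.E_add_right hAv hu hv]
  rw [S.hlin_add _ huu _ (S.hadd _ (S.hsmul 2 _ huv) _ hvv) _ hh]
  rw [S.hlin_add _ (S.hsmul 2 _ huv) _ hvv _ hh]
  rw [S.hlin_smul 2 _ huv _ hh]
  rw [S.hsym _ hAu v hv, S.hsym _ hAv u hu]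
  rw [S.hsym v hv _ hAu, S.hsym u hu _ hAv]
  ring

/-- Key cross-term positivity: if `u` sits at its maximum `T` wherever `v > 0`,
and `v = 0` wherever `u < T`, then the Φ-cross-term is nonnegative. -/
lemma cross_nonneg {h u v : X → ℝ} (hh : h ∈ S.𝒟) (hu : u ∈ S.𝒟) (hv : v ∈ S.𝒟)
    {c T : ℝ} (hc0 : 0 ≤ c) (hc : ∀ x, |h x| ≤ c) (hT : 0 ≤ T)
    (huT : ∀ x, u x ≤ T) (hv0 : ∀ x, 0 ≤ v x)
    (hsat : ∀ x, 0 < v x → u x = T) (hzero : ∀ x, u x < T → v x = 0) :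
    0 ≤ S.ℰ (c • u - u * h) v + S.ℰ (c • v - v * h) u + S.ℰ (u * v) h := by
  have hc0 : 0 ≤ c := hc0
  have hAu : c • u - u * h ∈ S.𝒟 := S.memA hh hu c
  have hAv : c • v - v * h ∈ S.𝒟 := S.memA hh hv c
  -- collapse of the product
  have hcol : u * v = T • v := by
    funext x
    simp only [Pi.mul_apply, Pi.smul_apply, smul_eq_mul]
    rcases lt_or_eq_of_le (hv0 x) with hx | hx
    · rw [hsat x hx]
    · rw [← hx]; ring
  -- term2 ≥ 0 by the maximum principle
  have hterm2 : 0 ≤ S.ℰ (c • v - v * h) u := by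
    apply S.M_max hu hAv hT huT
    · intro x
      simp only [Pi.sub_apply, Pi.smul_apply, Pi.mul_apply, smul_eq_mul]
      have h2 := (abs_le.mp (hc x)).2
      nlinarith [hv0 x]
    · intro x hx
      simp only [Pi.sub_apply, Pi.smul_apply, Pi.mul_apply, smul_eq_mul] at hx
      apply hsat x
      rcases lt_or_eq_of_le (hv0 x) with h' | h'
      · exact h'
      · exfalso; rw [← h'] at hx; simp at hx
  -- term1 + term3 = ℰ(R, v) ≥ 0 by the plateau maximum principle
  set R : X → ℝ := (c • u - u * h) + T • h with hRdef
  have hR : R ∈ S.𝒟 := S.hadd _ hAu _ (S.hsmul T h hh)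
  have hterm13 : 0 ≤ S.ℰ R v := by
    apply S.M_plateau hv hR (by positivity : (0:ℝ) ≤ c * T) hv0
    · intro x
      simp only [hRdef, Pi.add_apply, Pi.sub_apply, Pi.smul_apply, Pi.mul_apply, smul_eq_mul]
      have h2 := (abs_le.mp (hc x)).2
      nlinarith [huT x]
    · intro x hx
      simp only [hRdef, Pi.add_apply, Pi.sub_apply, Pi.smul_apply, Pi.mul_apply, smul_eq_mul] at hx
      apply hzero x
      rcases lt_or_eq_of_le (huT x) with h' | h'
      · exact h'
      · exfalso; rw [h'] at hx; nlinarith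
  have hsplit : S.ℰ R v = S.ℰ (c • u - u * h) v + T * S.ℰ h v := by
    rw [hRdef, S.hlin_add _ hAu _ (S.hsmul T h hh) _ hv, S.hlin_smul T h hh v hv]
  have hterm3 : S.ℰ (u * v) h = T * S.ℰ h v := by
    rw [hcol, S.hlin_smul T v hv h hh, S.hsym v hv h hh]
  rw [hterm3]
  rw [hsplit] at hterm13
  linarith

end EnergySetup

namespace EnergySetup

variable {X : Type*} (S : EnergySetup X)

/-- Sharp diagonal bound for a slice `w` with `|w| ≤ δ`. -/
lemma diag_bound {h w : X → ℝ} (hh : h ∈ S.𝒟) (hw : w ∈ S.𝒟)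
    {c δ μ ν : ℝ} (hc0 : 0 ≤ c) (hc : ∀ x, |h x| ≤ c)
    (hδ : 0 < δ) (hμ : 0 < μ) (hν : 0 < ν) (hwδ : ∀ x, |w x| ≤ δ) :
    -((2*δ*μ + 2*δ^2/ν) * S.ℰ w w + ((δ + c/μ)^2/(c + δ*μ) + ν/2) * S.ℰ h h)
      ≤ S.Phi h c w := by
  have hwh : w * h ∈ S.𝒟 := S.hmul w hw h hh
  have hww : w * w ∈ S.𝒟 := S.hmul w hw w hw
  have hρ : 0 < c + δ*μ := by positivity
  -- Phi h c w = 2c ℰ(w,w) - 2 ℰ(w*h, w) + ℰ(w*w, h)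
  have hPhi : S.Phi h c w = 2*c*S.ℰ w w - 2 * S.ℰ (w*h) w + S.ℰ (w*w) h := by
    unfold Phi
    rw [S.E_sub_left (S.hsmul c w hw) hwh hw, S.hlin_smul c w hw w hw]
    ring
  -- step 1 : 2 ℰ(w*h, w) ≤ ρ⁻¹ ℰ(wh,wh) + ρ ℰ(w,w) with ρ = c + δμ
  have h1 : 2 * S.ℰ (w*h) w ≤ (c + δ*μ)⁻¹ * S.ℰ (w*h) (w*h) + (c + δ*μ) * S.ℰ w w :=
    S.E_cs hwh hw hρ
  -- step 2 : product rule
  have h2 : S.ℰ (w*h) (w*h) ≤ (δ*μ + c)^2 * S.ℰ w w + (δ + c/μ)^2 * S.ℰ h h :=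
    S.E_prod hw hh hδ hc0 hμ hwδ hc
  -- step 3 : |ℰ(w², h)| bound
  have h3 : 2 * |S.ℰ (w*w) h| ≤ ν⁻¹ * S.ℰ (w*w) (w*w) + ν * S.ℰ h h :=
    S.E_cs_abs hww hh hν
  have h4 : S.ℰ (w*w) (w*w) ≤ 4*δ^2 * S.ℰ w w := S.E_sq hw hδ hwδ
  have h5 : - S.ℰ (w*w) h ≤ |S.ℰ (w*w) h| := neg_le_abs _
  have hEw : 0 ≤ S.ℰ w w := S.hnonneg w hw
  have hEh : 0 ≤ S.ℰ h h := S.hnonneg h hh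
  have hkey : (c + δ*μ)⁻¹ * (δ*μ + c)^2 = c + δ*μ := by
    field_simp
    ring
  have h6 : 2 * S.ℰ (w*h) w
      ≤ (c + δ*μ) * S.ℰ w w + (c+δ*μ)⁻¹ * (δ + c/μ)^2 * S.ℰ h h + (c + δ*μ) * S.ℰ w w := by
    have := mul_le_mul_of_nonneg_left h2 (by positivity : (0:ℝ) ≤ (c + δ*μ)⁻¹)
    calc 2 * S.ℰ (w*h) w ≤ (c + δ*μ)⁻¹ * S.ℰ (w*h) (w*h) + (c + δ*μ) * S.ℰ w w := h1
      _ ≤ (c + δ*μ)⁻¹ * ((δ*μ + c)^2 * S.ℰ w w + (δ + c/μ)^2 * S.ℰ h h)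
          + (c + δ*μ) * S.ℰ w w := by linarith
      _ = (c + δ*μ)⁻¹ * (δ*μ + c)^2 * S.ℰ w w + (c+δ*μ)⁻¹ * (δ + c/μ)^2 * S.ℰ h h
          + (c + δ*μ) * S.ℰ w w := by ring
      _ = (c + δ*μ) * S.ℰ w w + (c+δ*μ)⁻¹ * (δ + c/μ)^2 * S.ℰ h h
          + (c + δ*μ) * S.ℰ w w := by rw [hkey]
  have h7 : - S.ℰ (w*w) h ≤ (ν⁻¹ * (4*δ^2 * S.ℰ w w) + ν * S.ℰ h h) / 2 := by
    have : 2 * |S.ℰ (w*w) h| ≤ ν⁻¹ * (4*δ^2 * S.ℰ w w) + ν * S.ℰ h h := by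
      apply le_trans h3
      have := mul_le_mul_of_nonneg_left h4 (by positivity : (0:ℝ) ≤ ν⁻¹)
      linarith
    linarith
  have hcoef : (c+δ*μ)⁻¹ * (δ + c/μ)^2 = (δ + c/μ)^2/(c + δ*μ) :=
    (div_eq_inv_mul _ _).symm
  rw [hPhi]
  have hν2 : ν⁻¹ * (4*δ^2 * S.ℰ w w) / 2 = (2*δ^2/ν) * S.ℰ w w := by
    field_simp
    ring
  nlinarith [h6, h7]

end EnergySetup

namespace EnergySetup

variable {X : Type*} (S : EnergySetup X)

lemma mem_zero {f : X → ℝ} (hf : f ∈ S.𝒟) : (0 : X → ℝ) ∈ S.𝒟 := by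
  have : (0 : X → ℝ) = (0:ℝ) • f := by funext x; simp
  rw [this]; exact S.hsmul 0 f hf

lemma E_zero {f z : X → ℝ} (hf : f ∈ S.𝒟) (hz : z ∈ S.𝒟) : S.ℰ 0 z = 0 := by
  have h0 : (0 : X → ℝ) = (0:ℝ) • f := by funext x; simp
  rw [h0, S.hlin_smul 0 f hf z hz]; ring

lemma Phi_zero {f h : X → ℝ} (hf : f ∈ S.𝒟) (hh : h ∈ S.𝒟) (c : ℝ) :
    S.Phi h c (0 : X → ℝ) = 0 := by
  unfold Phi
  have e1 : c • (0 : X → ℝ) - (0 : X → ℝ) * h = 0 := by funext x; simp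
  have e2 : (0 : X → ℝ) * (0 : X → ℝ) = 0 := by funext x; simp
  rw [e1, e2, S.E_zero hf (S.mem_zero hf), S.E_zero hf hh]
  ring

/-- The master slicing estimate. -/
lemma sum_bound {f h : X → ℝ} (hf : f ∈ S.𝒟) (hh : h ∈ S.𝒟)
    {c : ℝ} (hc0 : 0 ≤ c) (hc : ∀ x, |h x| ≤ c)
    (hf0 : ∀ x, 0 ≤ f x) (n : ℕ) {δ μ ν : ℝ} (hδ : 0 < δ) (hμ : 0 < μ) (hν : 0 < ν)
    (hfM : ∀ x, f x ≤ (n:ℝ) * δ) :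
    -((2*δ*μ + 2*δ^2/ν) * S.ℰ f f
        + (n:ℝ)*((δ + c/μ)^2/(c + δ*μ) + ν/2) * S.ℰ h h)
      ≤ S.Phi h c f := by
  -- the slices and the truncations
  set w : ℕ → X → ℝ := fun j => fun x => min (max (f x - (j:ℝ)*δ) 0) δ with hwdef
  set g : ℕ → X → ℝ := fun j => fun x => min (f x) ((j:ℝ)*δ) with hgdef
  have hjδ : ∀ j : ℕ, 0 ≤ (j:ℝ)*δ := fun j => by positivity
  -- memberships
  have hwmem : ∀ j, w j ∈ S.𝒟 := by
    intro j
    have hNC : NormalContraction (fun s => min (max (s - (j:ℝ)*δ) 0) δ) := by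
      constructor
      · have h1 : max (0 - (j:ℝ)*δ) 0 = 0 := max_eq_right (by linarith [hjδ j])
        simp only [h1]
        exact min_eq_left hδ.le
      · intro x y
        calc |min (max (x - (j:ℝ)*δ) 0) δ - min (max (y - (j:ℝ)*δ) 0) δ|
            ≤ |max (x - (j:ℝ)*δ) 0 - max (y - (j:ℝ)*δ) 0| := abs_min_sub_min_le_abs' _ _ _
          _ ≤ |x - (j:ℝ)*δ - (y - (j:ℝ)*δ)| := abs_max_sub_max_le_abs _ _ _
          _ = |x - y| := by ring_nf
    exact S.hnc _ hNC f hf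
  have hgmem : ∀ j, g j ∈ S.𝒟 := by
    intro j
    have hNC : NormalContraction (fun s => min s ((j:ℝ)*δ)) := by
      constructor
      · exact min_eq_left (hjδ j)
      · intro x y; exact abs_min_sub_min_le_abs' _ _ _
    exact S.hnc _ hNC f hf
  -- pointwise facts
  have hgsucc : ∀ j, g (j+1) = g j + w j := by
    intro j
    funext x
    simp only [hgdef, hwdef, Pi.add_apply]
    have hcast : ((j:ℕ)+1 : ℕ) = (j:ℕ)+1 := rfl
    push_cast
    rcases le_total (f x) ((j:ℝ)*δ) with hx | hx
    · rw [min_eq_left hx, min_eq_left (by nlinarith : f x ≤ ((j:ℝ)+1)*δ)]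
      rw [max_eq_right (by linarith : f x - (j:ℝ)*δ ≤ 0), min_eq_left hδ.le]
      ring
    · rw [min_eq_right hx]
      rw [max_eq_left (by linarith : (0:ℝ) ≤ f x - (j:ℝ)*δ)]
      rcases le_total (f x) (((j:ℝ)+1)*δ) with hy | hy
      · rw [min_eq_left hy, min_eq_left (by nlinarith : f x - (j:ℝ)*δ ≤ δ)]
        ring
      · rw [min_eq_right hy, min_eq_right (by nlinarith : δ ≤ f x - (j:ℝ)*δ)]
        ring
  have hgn : g n = f := by
    funext x
    simp only [hgdef]
    exact min_eq_left (hfM x)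
  have hg0 : g 0 = 0 := by
    funext x
    simp only [hgdef]
    push_cast
    rw [zero_mul]
    exact min_eq_right (hf0 x)
  have hw0 : ∀ j x, 0 ≤ w j x := by
    intro j x
    simp only [hwdef]
    exact le_min (le_max_right _ _) hδ.le
  have hwδb : ∀ j x, |w j x| ≤ δ := by
    intro j x
    rw [abs_le]
    constructor
    · linarith [hw0 j x, hδ.le]
    · simp only [hwdef]; exact min_le_right _ _
  have hgle : ∀ j x, g j x ≤ (j:ℝ)*δ := by
    intro j x; simp only [hgdef]; exact min_le_right _ _
  have hsat : ∀ j x, 0 < w j x → g j x = (j:ℝ)*δ := by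
    intro j x hx
    simp only [hwdef] at hx
    rw [lt_min_iff] at hx
    have h1 : 0 < max (f x - (j:ℝ)*δ) 0 := hx.1
    have h2 : (j:ℝ)*δ < f x := by
      by_contra hcon
      push_neg at hcon
      rw [max_eq_right (by linarith)] at h1
      exact lt_irrefl 0 h1
    simp only [hgdef]
    exact min_eq_right h2.le
  have hzero : ∀ j x, g j x < (j:ℝ)*δ → w j x = 0 := by
    intro j x hx
    simp only [hgdef] at hx
    have h2 : f x < (j:ℝ)*δ := by
      by_contra hcon
      push_neg at hcon
      rw [min_eq_right hcon] at hx
      exact lt_irrefl _ hx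
    simp only [hwdef]
    rw [max_eq_right (by linarith), min_eq_left hδ.le]
  -- induction : Phi and energy superadditivity over slices
  have hind : ∀ j : ℕ,
      (∑ k ∈ Finset.range j, S.Phi h c (w k)) ≤ S.Phi h c (g j)
      ∧ (∑ k ∈ Finset.range j, S.ℰ (w k) (w k)) ≤ S.ℰ (g j) (g j) := by
    intro j
    induction j with
    | zero =>
        simp only [Finset.range_zero, Finset.sum_empty, hg0]
        constructor
        · rw [S.Phi_zero hf hh c]
        · rw [S.E_zero hf (S.mem_zero hf)]
    | succ j ih =>
        have hcross := S.cross_nonneg hh (hgmem j) (hwmem j) hc0 hc (hjδ j)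
          (hgle j) (hw0 j) (hsat j) (hzero j)
        have hEcross : 0 ≤ S.ℰ (g j) (w j) := by
          rw [S.hsym _ (hgmem j) _ (hwmem j)]
          exact S.M_max (hgmem j) (hwmem j) (hjδ j) (hgle j) (hw0 j) (hsat j)
        constructor
        · rw [Finset.sum_range_succ, hgsucc j,
            S.Phi_add hh (hgmem j) (hwmem j) c]
          linarith [ih.1]
        · rw [Finset.sum_range_succ, hgsucc j,
            S.E_expand' (hgmem j) (hwmem j)]
          linarith [ih.2]
  -- sum up the diagonal bounds
  have hdiag : ∀ k, -((2*δ*μ + 2*δ^2/ν) * S.ℰ (w k) (w k)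
      + ((δ + c/μ)^2/(c + δ*μ) + ν/2) * S.ℰ h h) ≤ S.Phi h c (w k) :=
    fun k => S.diag_bound hh (hwmem k) hc0 hc hδ hμ hν (hwδb k)
  have hA : 0 ≤ 2*δ*μ + 2*δ^2/ν := by positivity
  have hsum1 : ∑ k ∈ Finset.range n, S.ℰ (w k) (w k) ≤ S.ℰ f f := by
    rw [← hgn]; exact (hind n).2
  have hEh : 0 ≤ S.ℰ h h := S.hnonneg h hh
  have hsum2 : -((2*δ*μ + 2*δ^2/ν) * S.ℰ f f
      + (n:ℝ)*((δ + c/μ)^2/(c + δ*μ) + ν/2) * S.ℰ h h)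
      ≤ ∑ k ∈ Finset.range n, S.Phi h c (w k) := by
    have hstep : ∀ k ∈ Finset.range n,
        -((2*δ*μ + 2*δ^2/ν) * S.ℰ (w k) (w k)
          + ((δ + c/μ)^2/(c + δ*μ) + ν/2) * S.ℰ h h) ≤ S.Phi h c (w k) :=
      fun k _ => hdiag k
    have hs := Finset.sum_le_sum hstep
    have heq : ∑ k ∈ Finset.range n,
        (-((2*δ*μ + 2*δ^2/ν) * S.ℰ (w k) (w k)
          + ((δ + c/μ)^2/(c + δ*μ) + ν/2) * S.ℰ h h))
        = -((2*δ*μ + 2*δ^2/ν) * (∑ k ∈ Finset.range n, S.ℰ (w k) (w k))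
          + (n:ℝ)*((δ + c/μ)^2/(c + δ*μ) + ν/2) * S.ℰ h h) := by
      have hterm : ∀ k ∈ Finset.range n,
          -((2*δ*μ + 2*δ^2/ν) * S.ℰ (w k) (w k)
            + ((δ + c/μ)^2/(c + δ*μ) + ν/2) * S.ℰ h h)
          = (-(2*δ*μ + 2*δ^2/ν)) * S.ℰ (w k) (w k)
            + (-(((δ + c/μ)^2/(c + δ*μ) + ν/2) * S.ℰ h h)) := by
        intro k _; ring
      rw [Finset.sum_congr rfl hterm, Finset.sum_add_distrib, ← Finset.mul_sum,
        Finset.sum_const, Finset.card_range, nsmul_eq_mul]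
      ring
    rw [heq] at hs
    have hmono : -((2*δ*μ + 2*δ^2/ν) * S.ℰ f f
        + (n:ℝ)*((δ + c/μ)^2/(c + δ*μ) + ν/2) * S.ℰ h h)
        ≤ -((2*δ*μ + 2*δ^2/ν) * (∑ k ∈ Finset.range n, S.ℰ (w k) (w k))
          + (n:ℝ)*((δ + c/μ)^2/(c + δ*μ) + ν/2) * S.ℰ h h) := by
      have := mul_le_mul_of_nonneg_left hsum1 hA
      linarith
    linarith
  calc -((2*δ*μ + 2*δ^2/ν) * S.ℰ f f
      + (n:ℝ)*((δ + c/μ)^2/(c + δ*μ) + ν/2) * S.ℰ h h)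
      ≤ ∑ k ∈ Finset.range n, S.Phi h c (w k) := hsum2
    _ ≤ S.Phi h c (g n) := (hind n).1
    _ = S.Phi h c f := by rw [hgn]

end EnergySetup

namespace EnergySetup

variable {X : Type*} (S : EnergySetup X)

set_option maxHeartbeats 2000000 in
/-- Φ ≥ 0 for nonnegative bounded f. -/
lemma key_nonneg {f h : X → ℝ} (hf : f ∈ S.𝒟) (hh : h ∈ S.𝒟)
    {c M : ℝ} (hc0 : 0 ≤ c) (hc : ∀ x, |h x| ≤ c)
    (hM : 0 < M) (hf0 : ∀ x, 0 ≤ f x) (hfM : ∀ x, f x ≤ M) :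
    0 ≤ S.Phi h c f := by
  have hE : 0 ≤ S.ℰ f f := S.hnonneg f hf
  have hEh : 0 ≤ S.ℰ h h := S.hnonneg h hh
  set KK : ℝ := (2*M+2) * S.ℰ f f + ((M+c)^2/M + M^2/2) * S.ℰ h h with hKKdef
  have hKK : 0 ≤ KK := by
    apply add_nonneg
    · apply mul_nonneg (by linarith) hE
    · apply mul_nonneg (by positivity) hEh
  have hmain : ∀ m : ℕ, 1 ≤ m → -(KK/(m:ℝ)) ≤ S.Phi h c f := by
    intro m hm
    set r : ℝ := (m:ℝ) with hrdef
    have hr1 : 1 ≤ r := by rw [hrdef]; exact_mod_cast hm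
    have hr0 : 0 < r := by linarith
    have hrne : r ≠ 0 := ne_of_gt hr0
    set δ : ℝ := M/r^4 with hδdef
    set μ : ℝ := r^3 with hμdef
    set ν : ℝ := M^2/r^7 with hνdef
    have hδ : 0 < δ := by positivity
    have hμp : 0 < μ := by positivity
    have hνp : 0 < ν := by positivity
    have hfM' : ∀ x, f x ≤ ((m^4 : ℕ):ℝ) * δ := by
      intro x
      have hcast : ((m^4 : ℕ):ℝ) * δ = M := by
        push_cast
        rw [hδdef, ← hrdef]
        field_simp
      rw [hcast]; exact hfM x
    have hsb := S.sum_bound hf hh hc0 hc hf0 (m^4) hδ hμp hνp hfM'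
    -- coefficient computations
    have hA : 2*δ*μ + 2*δ^2/ν = (2*M+2)/r := by
      rw [hδdef, hμdef, hνdef]
      field_simp
    have hδμ : δ*μ = M/r := by
      rw [hδdef, hμdef]; field_simp
    have hq2 : δ + c/μ ≤ (M+c)/r^3 := by
      have hq : δ + c/μ = (M + c*r)/r^4 := by
        rw [hδdef, hμdef]; field_simp
      rw [hq]
      have h1 : M + c*r ≤ r*(M+c) := by nlinarith
      calc (M + c*r)/r^4 ≤ (r*(M+c))/r^4 :=
            div_le_div_of_nonneg_right h1 (by positivity)
        _ = (M+c)/r^3 := by field_simp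
    have hden : M/r ≤ c + δ*μ := by
      rw [hδμ]; linarith
    have hsq : (δ + c/μ)^2 ≤ (M+c)^2/r^6 := by
      have h0 : 0 ≤ δ + c/μ := by positivity
      calc (δ + c/μ)^2 ≤ ((M+c)/r^3)^2 := pow_le_pow_left₀ h0 hq2 2
        _ = (M+c)^2/r^6 := by rw [div_pow, ← pow_mul]
    have hfrac : (δ + c/μ)^2/(c + δ*μ) ≤ (M+c)^2/(M*r^5) := by
      have hd : 0 < M/r := by positivity
      have := div_le_div₀ (by positivity : (0:ℝ) ≤ (M+c)^2/r^6) hsq hd hden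
      calc (δ + c/μ)^2/(c + δ*μ) ≤ ((M+c)^2/r^6)/(M/r) := this
        _ = (M+c)^2/(M*r^5) := by field_simp
    have hcoefB : ((m^4 : ℕ):ℝ) * ((δ + c/μ)^2/(c + δ*μ) + ν/2)
        ≤ ((M+c)^2/M + M^2/2)/r := by
      have hcast4 : ((m^4 : ℕ):ℝ) = r^4 := by push_cast; rw [hrdef]
      rw [hcast4]
      have hb1 : (δ + c/μ)^2/(c + δ*μ) + ν/2 ≤ (M+c)^2/(M*r^5) + M^2/(2*r^7) := by
        have hν2 : ν/2 = M^2/(2*r^7) := by rw [hνdef]; field_simp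
        rw [hν2]
        linarith [hfrac]
      have hb2 : r^4 * ((δ + c/μ)^2/(c + δ*μ) + ν/2)
          ≤ r^4 * ((M+c)^2/(M*r^5) + M^2/(2*r^7)) :=
        mul_le_mul_of_nonneg_left hb1 (by positivity)
      have hb3 : r^4 * ((M+c)^2/(M*r^5) + M^2/(2*r^7))
          = (M+c)^2/(M*r) + M^2/(2*r^3) := by
        field_simp
      have hb4 : M^2/(2*r^3) ≤ M^2/(2*r) := by
        apply div_le_div_of_nonneg_left (by positivity) (by positivity)
        have hr2 : 1 ≤ r^2 := by nlinarith
        nlinarith [mul_le_mul_of_nonneg_left hr2 hr0.le]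
      have hb5 : (M+c)^2/(M*r) + M^2/(2*r) = ((M+c)^2/M + M^2/2)/r := by
        field_simp
      calc r^4 * ((δ + c/μ)^2/(c + δ*μ) + ν/2)
          ≤ (M+c)^2/(M*r) + M^2/(2*r^3) := by rw [← hb3]; exact hb2
        _ ≤ (M+c)^2/(M*r) + M^2/(2*r) := by linarith
        _ = ((M+c)^2/M + M^2/2)/r := hb5
    -- final assembly
    have hterm1 : (2*δ*μ + 2*δ^2/ν) * S.ℰ f f ≤ ((2*M+2)/r) * S.ℰ f f := by
      rw [hA]
    have hterm2 : ((m^4 : ℕ):ℝ)*((δ + c/μ)^2/(c + δ*μ) + ν/2) * S.ℰ h h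
        ≤ (((M+c)^2/M + M^2/2)/r) * S.ℰ h h :=
      mul_le_mul_of_nonneg_right hcoefB hEh
    have hKKr : ((2*M+2)/r) * S.ℰ f f + (((M+c)^2/M + M^2/2)/r) * S.ℰ h h
        = KK/r := by
      rw [hKKdef]
      field_simp
    have : -(KK/r) ≤ -((2*δ*μ + 2*δ^2/ν) * S.ℰ f f
        + ((m^4 : ℕ):ℝ)*((δ + c/μ)^2/(c + δ*μ) + ν/2) * S.ℰ h h) := by
      rw [← hKKr]
      linarith
    linarith [hsb]
  by_contra hneg
  push_neg at hneg
  obtain ⟨m, hm⟩ := exists_nat_gt (KK / (-(S.Phi h c f)))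
  have hPhineg : 0 < -(S.Phi h c f) := by linarith
  have hq0 : 0 ≤ KK / (-(S.Phi h c f)) := div_nonneg hKK hPhineg.le
  have hm0 : 0 < (m:ℝ) := lt_of_le_of_lt hq0 hm
  have hm1 : 1 ≤ m := Nat.one_le_iff_ne_zero.mpr (by
    intro h0
    rw [h0] at hm0
    simp at hm0)
  have h2 := hmain m hm1
  have h3 : KK < (m:ℝ) * (-(S.Phi h c f)) := (div_lt_iff₀ hPhineg).mp hm
  have h4 : KK/(m:ℝ) < -(S.Phi h c f) := (div_lt_iff₀ hm0).mpr (by linarith)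
  linarith

end EnergySetup

namespace EnergySetup

variable {X : Type*} (S : EnergySetup X)

lemma Phi_eval {f h : X → ℝ} (hf : f ∈ S.𝒟) (hh : h ∈ S.𝒟) (c : ℝ) :
    S.Phi h c f = 2*c*S.ℰ f f - 2 * S.ℰ (f*h) f + S.ℰ (f*f) h := by
  unfold Phi
  rw [S.E_sub_left (S.hsmul c f hf) (S.hmul f hf h hh) hf, S.hlin_smul c f hf f hf]
  ring

lemma Phi_neg_eq {h v : X → ℝ} (hh : h ∈ S.𝒟) (hv : v ∈ S.𝒟) (c : ℝ) :
    S.Phi h c ((-1:ℝ) • v) = S.Phi h c v := by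
  have hAv : c • v - v * h ∈ S.𝒟 := S.memA hh hv c
  have e1 : c • ((-1:ℝ) • v) - ((-1:ℝ) • v) * h = (-1:ℝ) • (c • v - v * h) := by
    funext x
    simp only [Pi.sub_apply, Pi.smul_apply, Pi.mul_apply, smul_eq_mul]
    ring
  have e2 : ((-1:ℝ) • v) * ((-1:ℝ) • v) = v * v := by
    funext x
    simp only [Pi.mul_apply, Pi.smul_apply, smul_eq_mul]
    ring
  unfold Phi
  rw [e1, e2, S.hlin_smul (-1) _ hAv _ (S.hsmul (-1) v hv),
    S.E_smul_right (-1) hAv hv]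
  ring

/-- Φ ≥ 0 for arbitrary bounded f via the decomposition `f = f₊ - f₋`. -/
lemma key_signed {f h : X → ℝ} (hf : f ∈ S.𝒟) (hh : h ∈ S.𝒟)
    {c M : ℝ} (hc0 : 0 ≤ c) (hc : ∀ x, |h x| ≤ c)
    (hM : 0 < M) (habs : ∀ x, |f x| ≤ M) :
    0 ≤ S.Phi h c f := by
  set fp : X → ℝ := (fun s => max s 0) ∘ f with hfpdef
  set fm : X → ℝ := (fun s => max (-s) 0) ∘ f with hfmdef
  have hfp : fp ∈ S.𝒟 := by
    apply S.hnc _ _ f hf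
    constructor
    · simp
    · intro x y; exact abs_max_sub_max_le_abs x y 0
  have hfm : fm ∈ S.𝒟 := by
    apply S.hnc _ _ f hf
    constructor
    · simp
    · intro x y
      have := abs_max_sub_max_le_abs (-x) (-y) 0
      calc |max (-x) 0 - max (-y) 0| ≤ |(-x) - (-y)| := this
        _ = |x - y| := by rw [← abs_neg]; ring_nf
  have hfp0 : ∀ x, 0 ≤ fp x := fun x => le_max_right _ _
  have hfm0 : ∀ x, 0 ≤ fm x := fun x => le_max_right _ _
  have hfpM : ∀ x, fp x ≤ M := by
    intro x
    simp only [hfpdef, Function.comp_apply]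
    rcases le_total (f x) 0 with hx | hx
    · rw [max_eq_right hx]; linarith
    · rw [max_eq_left hx]; exact le_trans (le_abs_self _) (habs x)
  have hfmM : ∀ x, fm x ≤ M := by
    intro x
    simp only [hfmdef, Function.comp_apply]
    rcases le_total (f x) 0 with hx | hx
    · rw [max_eq_left (by linarith)]
      calc -(f x) ≤ |f x| := neg_le_abs _
        _ ≤ M := habs x
    · rw [max_eq_right (by linarith)]; linarith
  have hsplit : f = fp + (-1:ℝ) • fm := by
    funext x
    simp only [hfpdef, hfmdef, Pi.add_apply, Pi.smul_apply, Function.comp_apply,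
      smul_eq_mul]
    rcases le_total (f x) 0 with hx | hx
    · rw [max_eq_right hx, max_eq_left (by linarith)]; ring
    · rw [max_eq_left hx, max_eq_right (by linarith)]; ring
  have hP1 : 0 ≤ S.Phi h c fp := S.key_nonneg hfp hh hc0 hc hM hfp0 hfpM
  have hP2 : 0 ≤ S.Phi h c fm := S.key_nonneg hfm hh hc0 hc hM hfm0 hfmM
  have hmfm : (-1:ℝ) • fm ∈ S.𝒟 := S.hsmul (-1) fm hfm
  have hcross := S.cross_nonneg (u := (-1:ℝ) • fm) (v := fp) hh hmfm hfp hc0 hc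
    (le_refl (0:ℝ))
    (fun x => by
      simp only [Pi.smul_apply, smul_eq_mul]
      nlinarith [hfm0 x])
    hfp0
    (fun x hx => by
      simp only [Pi.smul_apply, smul_eq_mul]
      have hfx : 0 < f x := by
        by_contra hcon
        push_neg at hcon
        have : fp x = 0 := by
          simp only [hfpdef, Function.comp_apply]
          exact max_eq_right hcon
        rw [this] at hx
        exact lt_irrefl 0 hx
      have : fm x = 0 := by
        simp only [hfmdef, Function.comp_apply]
        exact max_eq_right (by linarith)
      rw [this]; ring)
    (fun x hx => by
      simp only [Pi.smul_apply, smul_eq_mul] at hx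
      have hfmx : 0 < fm x := by nlinarith
      have hfx : f x < 0 := by
        by_contra hcon
        push_neg at hcon
        have : fm x = 0 := by
          simp only [hfmdef, Function.comp_apply]
          exact max_eq_right (by linarith)
        rw [this] at hfmx
        exact lt_irrefl 0 hfmx
      simp only [hfpdef, Function.comp_apply]
      exact max_eq_right hfx.le)
  have hadd := S.Phi_add (u := fp) (v := (-1:ℝ) • fm) hh hfp hmfm c
  rw [← hsplit] at hadd
  have hneg := S.Phi_neg_eq hh hfm c
  have hcomm : fp * ((-1:ℝ) • fm) = ((-1:ℝ) • fm) * fp := mul_comm _ _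
  rw [hadd, hneg]
  rw [hcomm]
  linarith

end EnergySetup

/-- Theorem (boundedness of the functionals `L_f`): under the same hypotheses as for
positivity, `‖L_f‖_{𝒟'} ≤ 2ℰ(f)`, i.e. `|2ℰ(f·h, f) − ℰ(f², h)| ≤ 2‖h‖_sup ℰ(f,f)`
for all `f, h ∈ 𝒟`. -/
theorem statement_1 {X : Type*} [Nonempty X] (𝒟 : Set (X → ℝ))
    (ℰ : (X → ℝ) → (X → ℝ) → ℝ)
    (hbdd : ∀ f ∈ 𝒟, ∃ C : ℝ, ∀ x, |f x| ≤ C)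
    (hadd : ∀ f ∈ 𝒟, ∀ g ∈ 𝒟, f + g ∈ 𝒟)
    (hsmul : ∀ c : ℝ, ∀ f ∈ 𝒟, c • f ∈ 𝒟)
    (hmul : ∀ f ∈ 𝒟, ∀ g ∈ 𝒟, f * g ∈ 𝒟)
    (hnc : ∀ F : ℝ → ℝ, NormalContraction F → ∀ f ∈ 𝒟, F ∘ f ∈ 𝒟)
    (hC1 : ∀ f ∈ 𝒟, ∀ g ∈ 𝒟, ∀ φ : ℝ × ℝ → ℝ, ContDiff ℝ 1 φ → HasCompactSupport φ →
      φ (0, 0) = 0 → (fun x => φ (f x, g x)) ∈ 𝒟)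
    (hsym : ∀ f ∈ 𝒟, ∀ g ∈ 𝒟, ℰ f g = ℰ g f)
    (hlin_add : ∀ f ∈ 𝒟, ∀ g ∈ 𝒟, ∀ h ∈ 𝒟, ℰ (f + g) h = ℰ f h + ℰ g h)
    (hlin_smul : ∀ c : ℝ, ∀ f ∈ 𝒟, ∀ g ∈ 𝒟, ℰ (c • f) g = c * ℰ f g)
    (hnonneg : ∀ f ∈ 𝒟, 0 ≤ ℰ f f)
    (hop : ∀ F : ℝ → ℝ, NormalContraction F → ∀ f ∈ 𝒟, ℰ (F ∘ f) (F ∘ f) ≤ ℰ f f)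
    (hclos : SupNormClosable 𝒟 ℰ) :
    ∀ f ∈ 𝒟, ∀ h ∈ 𝒟,
      |2 * ℰ (f * h) f - ℰ (f * f) h| ≤ 2 * supNorm h * ℰ f f := by
  intro f hf h hh
  set S : EnergySetup X :=
    ⟨𝒟, ℰ, hadd, hsmul, hmul, hnc, hsym, hlin_add, hlin_smul, hnonneg, hop⟩ with hS
  have hfS : f ∈ S.𝒟 := hf
  have hhS : h ∈ S.𝒟 := hh
  -- bound for f
  obtain ⟨C, hC⟩ := hbdd f hf
  have hC0 : 0 ≤ C := le_trans (abs_nonneg _) (hC (Classical.arbitrary X))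
  have hM : 0 < C + 1 := by linarith
  have habsf : ∀ x, |f x| ≤ C + 1 := fun x => le_trans (hC x) (by linarith)
  -- c := supNorm h
  obtain ⟨Ch, hCh⟩ := hbdd h hh
  have hbddr : BddAbove (Set.range fun x => |h x|) := by
    refine ⟨Ch, ?_⟩
    rintro y ⟨x, rfl⟩
    exact hCh x
  have hc : ∀ x, |h x| ≤ supNorm h := fun x => le_ciSup hbddr x
  have hc0 : 0 ≤ supNorm h := le_trans (abs_nonneg _) (hc (Classical.arbitrary X))
  -- upper bound
  have hup : 0 ≤ S.Phi h (supNorm h) f := S.key_signed hfS hhS hc0 hc hM habsf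
  rw [S.Phi_eval hfS hhS (supNorm h)] at hup
  -- lower bound, with h replaced by -h
  have hh' : ((-1:ℝ) • h) ∈ S.𝒟 := S.hsmul (-1) h hhS
  have hc' : ∀ x, |((-1:ℝ) • h) x| ≤ supNorm h := by
    intro x
    simp only [Pi.smul_apply, smul_eq_mul]
    rw [show (-1:ℝ) * h x = -(h x) by ring, abs_neg]
    exact hc x
  have hlow : 0 ≤ S.Phi ((-1:ℝ) • h) (supNorm h) f :=
    S.key_signed hfS hh' hc0 hc' hM habsf
  rw [S.Phi_eval hfS hh' (supNorm h)] at hlow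
  have e1 : f * ((-1:ℝ) • h) = (-1:ℝ) • (f * h) := by
    funext x
    simp only [Pi.mul_apply, Pi.smul_apply, smul_eq_mul]
    ring
  rw [e1, S.E_neg_left (S.hmul f hfS h hhS) hfS,
    S.E_smul_right (-1) (S.hmul f hfS f hfS) hhS] at hlow
  rw [abs_le]
  constructor
  · -- lower
    have : S.ℰ (f*h) f = ℰ (f*h) f := rfl
    linarith [hlow]
  · linarith [hup]
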